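/- arXiv:2408.01409 — 2 statements merged into one kernel-verified Lean document; each statement's English description precedes it below -/
import Mathlib

section
/- Let A ∈ ℝ^{d×d}, h > 0, u_0 ∈ ℝ^d, and let (w(t), w̄(t)) solve the deterministic Euler dynamics with initial value u_0. Then for every t ≥ 0: ‖w'(t) − A w(t)‖ ≤ √2 · h · ‖exp(tB)‖ · ‖A‖² · ‖u_0‖, where w'(t) = A w̄(t) and ‖exp(tB)‖, ‖A‖ are operator norms. -/
open Matrix

/-- The block matrix `B = [[0, A], [h⁻¹ I, −h⁻¹ I]]` of the deterministic Euler dynamics. -/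
noncomputable def eulerBlock {d : ℕ} (A : Matrix (Fin d) (Fin d) ℝ) (h : ℝ) :
    Matrix (Fin d ⊕ Fin d) (Fin d ⊕ Fin d) ℝ :=
  Matrix.fromBlocks 0 A (h⁻¹ • 1) (-(h⁻¹ • (1 : Matrix (Fin d) (Fin d) ℝ)))

/-- The Euclidean norm of a vector in `ℝ^n`. -/
noncomputable def eucNorm {n : Type*} [Fintype n] (x : n → ℝ) : ℝ :=
  ‖(WithLp.equiv 2 (n → ℝ)).symm x‖

/-- The operator norm (w.r.t. Euclidean norms) of a real square matrix. -/
noncomputable def matOpNorm {n : Type*} [Fintype n] [DecidableEq n] (M : Matrix n n ℝ) : ℝ :=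
  ‖Matrix.toEuclideanCLM (𝕜 := ℝ) M‖

/-- The full pair `(w(t), w̄(t)) = exp(tB)(u₀, u₀)ᵀ` of the deterministic Euler dynamics. -/
noncomputable def detEulerPair {d : ℕ} (A : Matrix (Fin d) (Fin d) ℝ) (h : ℝ)
    (u0 : Fin d → ℝ) (t : ℝ) : (Fin d ⊕ Fin d) → ℝ :=
  (NormedSpace.exp (t • eulerBlock A h)).mulVec (Sum.elim u0 u0)

/-- The first component `w(t)` of the deterministic Euler dynamics. -/
noncomputable def detEulerW {d : ℕ} (A : Matrix (Fin d) (Fin d) ℝ) (h : ℝ)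
    (u0 : Fin d → ℝ) (t : ℝ) : Fin d → ℝ :=
  fun i => detEulerPair A h u0 t (Sum.inl i)

/-- The companion process `w̄(t)` of the deterministic Euler dynamics. -/
noncomputable def detEulerWbar {d : ℕ} (A : Matrix (Fin d) (Fin d) ℝ) (h : ℝ)
    (u0 : Fin d → ℝ) (t : ℝ) : Fin d → ℝ :=
  fun i => detEulerPair A h u0 t (Sum.inr i)

lemma eucNorm_nonneg {n : Type*} [Fintype n] (x : n → ℝ) : 0 ≤ eucNorm x :=
  norm_nonneg _

lemma eucNorm_mulVec_le {n : Type*} [Fintype n] [DecidableEq n] (M : Matrix n n ℝ)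
    (x : n → ℝ) : eucNorm (M.mulVec x) ≤ matOpNorm M * eucNorm x := by
  have := (Matrix.toEuclideanCLM (𝕜 := ℝ) M).le_opNorm ((WithLp.equiv 2 (n → ℝ)).symm x)
  exact this

lemma eucNorm_sq {n : Type*} [Fintype n] (x : n → ℝ) :
    eucNorm x = Real.sqrt (∑ i, x i ^ 2) := by
  rw [eucNorm, EuclideanSpace.norm_eq]
  congr 1
  refine Finset.sum_congr rfl fun i _ => ?_
  rw [Real.norm_eq_abs, sq_abs]
  rfl

lemma eucNorm_inr_le {d : ℕ} (y : (Fin d ⊕ Fin d) → ℝ) :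
    eucNorm (fun i => y (Sum.inr i)) ≤ eucNorm y := by
  rw [eucNorm_sq, eucNorm_sq]
  apply Real.sqrt_le_sqrt
  rw [Fintype.sum_sum_type]
  exact le_add_of_nonneg_left (Finset.sum_nonneg fun i _ => sq_nonneg _)

lemma eucNorm_elim_zero {d : ℕ} (x : Fin d → ℝ) :
    eucNorm (Sum.elim x (0 : Fin d → ℝ)) = eucNorm x := by
  rw [eucNorm_sq, eucNorm_sq, Fintype.sum_sum_type]
  simp

lemma eucNorm_smul {n : Type*} [Fintype n] (c : ℝ) (x : n → ℝ) :
    eucNorm (c • x) = |c| * eucNorm x := by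
  have : (WithLp.equiv 2 (n → ℝ)).symm (c • x) = c • (WithLp.equiv 2 (n → ℝ)).symm x := rfl
  rw [eucNorm, this, norm_smul, Real.norm_eq_abs]; rfl

lemma eulerBlock_comm_exp {d : ℕ} (A : Matrix (Fin d) (Fin d) ℝ) (h t : ℝ) :
    eulerBlock A h * NormedSpace.exp (t • eulerBlock A h)
      = NormedSpace.exp (t • eulerBlock A h) * eulerBlock A h := by
  letI : SeminormedRing (Matrix (Fin d ⊕ Fin d) (Fin d ⊕ Fin d) ℝ) := Matrix.linftyOpSemiNormedRing
  letI : NormedRing (Matrix (Fin d ⊕ Fin d) (Fin d ⊕ Fin d) ℝ) := Matrix.linftyOpNormedRing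
  letI : NormedAlgebra ℝ (Matrix (Fin d ⊕ Fin d) (Fin d ⊕ Fin d) ℝ) := Matrix.linftyOpNormedAlgebra
  exact ((Commute.refl (eulerBlock A h)).smul_right t).exp_right

/-- `‖w'(t) − A w(t)‖ ≤ √2 · h · ‖exp(tB)‖ · ‖A‖² · ‖u₀‖` for all `t ≥ 0`,
where `w'(t) = A w̄(t)`. -/
theorem stmt3 {d : ℕ} (A : Matrix (Fin d) (Fin d) ℝ) (h : ℝ) (hh : 0 < h)
    (u0 : Fin d → ℝ) :
    ∀ t : ℝ, 0 ≤ t →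
      eucNorm (A.mulVec (detEulerWbar A h u0 t) - A.mulVec (detEulerW A h u0 t))
        ≤ Real.sqrt 2 * h * matOpNorm (NormedSpace.exp (t • eulerBlock A h))
            * matOpNorm A ^ 2 * eucNorm u0 := by
  intro t ht
  set E := NormedSpace.exp (t • eulerBlock A h) with hE
  set w := detEulerW A h u0 t with hw
  set wb := detEulerWbar A h u0 t with hwb
  set v := E.mulVec (Sum.elim (A.mulVec u0) (0 : Fin d → ℝ)) with hv
  -- the pair is `Sum.elim w wb`
  have hp : detEulerPair A h u0 t = Sum.elim w wb := by
    funext i; cases i <;> rfl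
  -- B.mulVec (pair) = v
  have hBv : (eulerBlock A h).mulVec (detEulerPair A h u0 t) = v := by
    rw [detEulerPair, Matrix.mulVec_mulVec, ← hE, eulerBlock_comm_exp, ← Matrix.mulVec_mulVec, hv]
    rw [eulerBlock, Matrix.fromBlocks_mulVec]
    simp [Matrix.neg_mulVec]
    rfl
  -- extract the `inr` component
  have key : ∀ i, wb i - w i = (-h) * v (Sum.inr i) := by
    intro i
    have := congrFun hBv (Sum.inr i)
    rw [hp, eulerBlock, Matrix.fromBlocks_mulVec] at this
    simp only [Sum.elim_inr, Matrix.smul_mulVec, Matrix.one_mulVec, Matrix.neg_mulVec,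
      Pi.add_apply, Pi.smul_apply, Pi.neg_apply, smul_eq_mul, Function.comp_apply, Sum.elim_inl] at this
    have hne : h ≠ 0 := ne_of_gt hh
    field_simp at this ⊢
    nlinarith [this]
  have hsub : A.mulVec wb - A.mulVec w = (-h) • A.mulVec (fun i => v (Sum.inr i)) := by
    have hvec : wb - w = (-h) • (fun i => v (Sum.inr i)) :=
      funext fun i => by simpa using key i
    rw [← Matrix.mulVec_sub, hvec, Matrix.mulVec_smul]
  rw [hsub, eucNorm_smul, abs_neg, abs_of_pos hh]
  have b1 : eucNorm (A.mulVec fun i => v (Sum.inr i)) ≤ matOpNorm A * eucNorm v := by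
    calc eucNorm (A.mulVec fun i => v (Sum.inr i))
        ≤ matOpNorm A * eucNorm (fun i => v (Sum.inr i)) := eucNorm_mulVec_le _ _
      _ ≤ matOpNorm A * eucNorm v := by
          exact mul_le_mul_of_nonneg_left (eucNorm_inr_le v) (norm_nonneg _)
  have b2 : eucNorm v ≤ matOpNorm E * (matOpNorm A * eucNorm u0) := by
    calc eucNorm v ≤ matOpNorm E * eucNorm (Sum.elim (A.mulVec u0) 0) := eucNorm_mulVec_le _ _
      _ = matOpNorm E * eucNorm (A.mulVec u0) := by rw [eucNorm_elim_zero]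
      _ ≤ matOpNorm E * (matOpNorm A * eucNorm u0) :=
          mul_le_mul_of_nonneg_left (eucNorm_mulVec_le _ _) (norm_nonneg _)
  have hA0 : (0:ℝ) ≤ matOpNorm A := norm_nonneg _
  have hE0 : (0:ℝ) ≤ matOpNorm E := norm_nonneg _
  have hu0 : (0:ℝ) ≤ eucNorm u0 := eucNorm_nonneg _
  have h2 : (1:ℝ) ≤ Real.sqrt 2 := by
    rw [show (1:ℝ) = Real.sqrt 1 from (Real.sqrt_one).symm]
    exact Real.sqrt_le_sqrt (by norm_num)
  have main : h * eucNorm (A.mulVec fun i => v (Sum.inr i))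
      ≤ h * (matOpNorm E * matOpNorm A ^ 2 * eucNorm u0) := by
    apply mul_le_mul_of_nonneg_left _ hh.le
    calc eucNorm (A.mulVec fun i => v (Sum.inr i))
        ≤ matOpNorm A * eucNorm v := b1
      _ ≤ matOpNorm A * (matOpNorm E * (matOpNorm A * eucNorm u0)) :=
          mul_le_mul_of_nonneg_left b2 hA0
      _ = matOpNorm E * matOpNorm A ^ 2 * eucNorm u0 := by ring
  calc h * eucNorm (A.mulVec fun i => v (Sum.inr i))
      ≤ h * (matOpNorm E * matOpNorm A ^ 2 * eucNorm u0) := main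
    _ = 1 * h * matOpNorm E * matOpNorm A ^ 2 * eucNorm u0 := by ring
    _ ≤ Real.sqrt 2 * h * matOpNorm E * matOpNorm A ^ 2 * eucNorm u0 := by
        have : (0:ℝ) ≤ h * matOpNorm E * matOpNorm A ^ 2 * eucNorm u0 := by positivity
        nlinarith
end

section
/- Let f : ℝ^d → ℝ^d be Lipschitz continuous, let u_0 ∈ ℝ^d, and let u ∈ C([0,∞); ℝ^d) be the solution of u' = f(u), u(0) = u_0. For each h > 0 let (V_h(t))_{t≥0} be the stochastic Euler dynamics path with stepsize parameter h and initial value u_0; it is a random element of C([0,∞); ℝ^d). Then V_h converges weakly to the deterministic path u as h ↓ 0: for every bounded continuous functional F : C([0,∞); ℝ^d) → ℝ (with respect to the topology of uniform convergence on compact time intervals), lim_{h↓0} 𝔼[F(V_h)] = F(u). -/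
open MeasureTheory ProbabilityTheory
open scoped NNReal

/-- The jump times `T_k = H_1 + ⋯ + H_k` (here `H i` stands for `H_{i+1}`). -/
noncomputable def jumpTime {Ω : Type*} (H : ℕ → Ω → ℝ) (k : ℕ) (ω : Ω) : ℝ :=
  ∑ i ∈ Finset.range k, H i ω

/-- The counting process `K(t) = max {k : T_k ≤ t}`. -/
noncomputable def jumpCount {Ω : Type*} (H : ℕ → Ω → ℝ) (t : ℝ) (ω : Ω) : ℕ :=
  sSup {k | jumpTime H k ω ≤ t}

/-- The random timestep Euler chain `V̂_0 = u₀`, `V̂_k = V̂_{k−1} + H_k f(V̂_{k−1})`. -/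
noncomputable def eulerChain {Ω E : Type*} [AddCommGroup E] [Module ℝ E]
    (f : E → E) (u0 : E) (H : ℕ → Ω → ℝ) : ℕ → Ω → E
  | 0, _ => u0
  | (k + 1), ω => eulerChain f u0 H k ω + H k ω • f (eulerChain f u0 H k ω)

/-- The stochastic Euler dynamics path
`V(t) = V̂_{K(t)} + (t − T_{K(t)}) f(V̂_{K(t)})`. -/
noncomputable def eulerPath {Ω E : Type*} [AddCommGroup E] [Module ℝ E]
    (f : E → E) (u0 : E) (H : ℕ → Ω → ℝ) (t : ℝ) (ω : Ω) : E :=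
  eulerChain f u0 H (jumpCount H t ω) ω +
    (t - jumpTime H (jumpCount H t ω) ω) • f (eulerChain f u0 H (jumpCount H t ω) ω)

/-! ### Auxiliary lemmas -/

section Aux
open Real Set Filter
open scoped ENNReal Topology

lemma SE.exp_sub_one_le (z : ℝ) : 0 ≤ z → exp z - 1 ≤ z * exp z := by
  intro hz
  have h1 : -z + 1 ≤ exp (-z) := Real.add_one_le_exp (-z)
  have h2 : exp (-z) * exp z = 1 := by rw [← Real.exp_add]; simp
  nlinarith [Real.exp_pos z, Real.exp_pos (-z)]

lemma SE.gronwallBound_mono_x {K ε x y : ℝ} (hK : 0 < K) (hε : 0 ≤ ε) (hxy : x ≤ y) :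
    gronwallBound 0 K ε x ≤ gronwallBound 0 K ε y := by
  rw [gronwallBound_of_K_ne_0 hK.ne']
  simp only []
  have := Real.exp_le_exp.2 (mul_le_mul_of_nonneg_left hxy hK.le)
  have : Real.exp (K * x) - 1 ≤ Real.exp (K * y) - 1 := by linarith
  have hd : 0 ≤ ε / K := div_nonneg hε hK.le
  nlinarith

lemma SE.gronwallBound_le {K ε x y : ℝ} (hK : 0 < K) (hε : 0 ≤ ε) (hx : x ≤ y) (hy : 0 ≤ y) :
    gronwallBound 0 K ε x ≤ ε * (y * exp (K * y)) := by
  refine (SE.gronwallBound_mono_x hK hε hx).trans ?_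
  rw [gronwallBound_of_K_ne_0 hK.ne']
  have h1 : exp (K * y) - 1 ≤ (K * y) * exp (K * y) :=
    SE.exp_sub_one_le _ (mul_nonneg hK.le hy)
  have h2 : ε / K * (exp (K * y) - 1) ≤ ε / K * ((K * y) * exp (K * y)) :=
    mul_le_mul_of_nonneg_left h1 (div_nonneg hε hK.le)
  calc 0 * exp (K * y) + ε / K * (exp (K * y) - 1) = ε / K * (exp (K * y) - 1) := by ring
    _ ≤ ε / K * ((K * y) * exp (K * y)) := h2
    _ = ε * (y * exp (K * y)) := by field_simp

lemma SE.gronwallBound_nonneg {K ε x : ℝ} (hK : 0 < K) (hε : 0 ≤ ε) (hx : 0 ≤ x) :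
    0 ≤ gronwallBound 0 K ε x := by
  have := SE.gronwallBound_mono_x hK hε hx
  rwa [gronwallBound_x0] at this

section Jump
variable {Ω : Type*} (H : ℕ → Ω → ℝ) (ω : Ω)

lemma SE.jumpTime_succ (k : ℕ) : jumpTime H (k + 1) ω = jumpTime H k ω + H k ω :=
  Finset.sum_range_succ _ _

lemma SE.jumpTime_strictMono (hpos : ∀ k, 0 < H k ω) :
    StrictMono (fun k => jumpTime H k ω) := by
  apply strictMono_nat_of_lt_succ
  intro k
  rw [SE.jumpTime_succ]
  exact lt_add_of_pos_right _ (hpos k)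

lemma SE.jumpTime_zero : jumpTime H 0 ω = 0 := Finset.sum_range_zero _

lemma SE.jumpCount_eq (hpos : ∀ k, 0 < H k ω) {k : ℕ} {t : ℝ}
    (h1 : jumpTime H k ω ≤ t) (h2 : t < jumpTime H (k + 1) ω) :
    jumpCount H t ω = k := by
  have hsm := SE.jumpTime_strictMono H ω hpos
  have hmem : ∀ m ∈ {m | jumpTime H m ω ≤ t}, m ≤ k := by
    intro m hm
    by_contra hmk
    push_neg at hmk
    have : jumpTime H (k + 1) ω ≤ jumpTime H m ω := hsm.monotone hmk
    exact absurd (le_trans this hm) (not_le.2 h2)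
  have hk : k ∈ {m | jumpTime H m ω ≤ t} := h1
  exact le_antisymm (csSup_le ⟨k, hk⟩ hmem) (le_csSup ⟨k, fun m hm => hmem m hm⟩ hk)

lemma SE.jumpCount_spec (hpos : ∀ k, 0 < H k ω) {t : ℝ} {N : ℕ}
    (ht : 0 ≤ t) (htN : t < jumpTime H N ω) :
    jumpTime H (jumpCount H t ω) ω ≤ t ∧ t < jumpTime H (jumpCount H t ω + 1) ω ∧
      jumpCount H t ω < N := by
  have hsm := SE.jumpTime_strictMono H ω hpos
  set A := {m | jumpTime H m ω ≤ t} with hA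
  have h0 : (0 : ℕ) ∈ A := by simp [hA, SE.jumpTime_zero, ht]
  have hbdd : ∀ m ∈ A, m < N := by
    intro m hm
    by_contra hmk
    push_neg at hmk
    exact absurd (le_trans (hsm.monotone hmk) hm) (not_le.2 htN)
  have hKmem : jumpCount H t ω ∈ A :=
    Nat.sSup_mem ⟨0, h0⟩ ⟨N, fun m hm => (hbdd m hm).le⟩
  have hKN : jumpCount H t ω < N := hbdd _ hKmem
  refine ⟨hKmem, ?_, hKN⟩
  by_contra hcon
  push_neg at hcon
  have : jumpCount H t ω + 1 ≤ jumpCount H t ω :=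
    le_csSup ⟨N, fun m hm => (hbdd m hm).le⟩ hcon
  omega

end Jump

section Det
variable {Ω E : Type*} [NormedAddCommGroup E] [NormedSpace ℝ E]

/-- Deterministic error bound for the Euler path when all relevant steps are positive,
bounded by `δ`, and the first `N` steps cover `[0, T]`. -/
lemma SE.euler_det (f : E → E) (L' : ℝ) (hL1 : 1 ≤ L')
    (hLip : LipschitzWith (Real.toNNReal L') f)
    (u0 : E) (u : ℝ → E) (hu0 : u 0 = u0)
    (hu : ∀ t : ℝ, 0 ≤ t → HasDerivWithinAt u (f (u t)) (Set.Ici 0) t)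
    (H : ℕ → Ω → ℝ) (ω : Ω) (g : ℝ → E) (hg : Continuous g)
    (hge : ∀ t : ℝ, 0 ≤ t → g t = eulerPath f u0 H t ω)
    (T δ : ℝ) (hT : 0 < T) (hδ : 0 < δ) (hδL : δ * L' ≤ 1/2) (N : ℕ)
    (hpos : ∀ k, 0 < H k ω) (hsmall : ∀ k < N, H k ω ≤ δ)
    (hTN : T < jumpTime H N ω) :
    ∀ t ∈ Icc 0 T, dist (g t) (u t) ≤
      δ * (L' * (2 * ‖f u0‖ + 2 * L' * gronwallBound 0 (2*L') (2*‖f u0‖) T) *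
        (T * exp (L' * T))) := by
  have hL0 : 0 < L' := lt_of_lt_of_le one_pos hL1
  set S : ℕ → ℝ := fun k => jumpTime H k ω with hS
  set chain : ℕ → E := fun k => eulerChain f u0 H k ω with hchain
  set K : ℝ → ℕ := fun t => jumpCount H t ω with hK
  have hS0 : S 0 = 0 := SE.jumpTime_zero H ω
  have hSmono := SE.jumpTime_strictMono H ω hpos
  have hSnonneg : ∀ k, 0 ≤ S k := fun k => by
    have := hSmono.monotone (Nat.zero_le k)
    simpa [SE.jumpTime_zero H ω] using this
  have haff : ∀ (k : ℕ) (s : ℝ), S k ≤ s → s < S (k+1) →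
      eulerPath f u0 H s ω = chain k + (s - S k) • f (chain k) := by
    intro k s h1 h2
    have : jumpCount H s ω = k := SE.jumpCount_eq H ω hpos h1 h2
    rw [eulerPath, this]
  have hkey : ∀ t ∈ Icc (0:ℝ) T, S (K t) ≤ t ∧ t < S (K t + 1) ∧ K t < N := by
    intro t ht
    exact SE.jumpCount_spec H ω hpos ht.1 (lt_of_le_of_lt ht.2 hTN)
  have hgt : ∀ t ∈ Icc (0:ℝ) T, g t = chain (K t) + (t - S (K t)) • f (chain (K t)) := by
    intro t ht
    rw [hge t ht.1]
    exact haff _ _ (hkey t ht).1 (hkey t ht).2.1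
  have hstep : ∀ t ∈ Icc (0:ℝ) T, 0 ≤ t - S (K t) ∧ t - S (K t) ≤ δ := by
    intro t ht
    obtain ⟨h1, h2, h3⟩ := hkey t ht
    constructor
    · linarith
    · have : S (K t + 1) = S (K t) + H (K t) ω := SE.jumpTime_succ H ω _
      have hs := hsmall (K t) h3
      linarith
  have hdistchain : ∀ t ∈ Icc (0:ℝ) T, ‖g t - chain (K t)‖ ≤ δ * ‖f (chain (K t))‖ := by
    intro t ht
    rw [hgt t ht]
    simp only [add_sub_cancel_left, norm_smul, Real.norm_eq_abs,
      abs_of_nonneg (hstep t ht).1]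
    exact mul_le_mul_of_nonneg_right (hstep t ht).2 (norm_nonneg _)
  have hlip' : ∀ x y : E, ‖f x - f y‖ ≤ L' * ‖x - y‖ := by
    intro x y
    have := hLip.dist_le_mul x y
    rwa [dist_eq_norm, dist_eq_norm, Real.coe_toNNReal _ hL0.le] at this
  have hfb : ∀ t ∈ Icc (0:ℝ) T, ‖f (chain (K t))‖ ≤ 2 * ‖f u0‖ + 2 * L' * ‖g t - u0‖ := by
    intro t ht
    have h1 : ‖f (chain (K t))‖ ≤ ‖f u0‖ + L' * ‖chain (K t) - u0‖ := by
      have := hlip' (chain (K t)) u0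
      have h2 := norm_sub_norm_le (f (chain (K t))) (f u0)
      linarith
    have h2 : ‖chain (K t) - u0‖ ≤ ‖g t - u0‖ + ‖g t - chain (K t)‖ := by
      have := norm_sub_le_norm_sub_add_norm_sub (chain (K t)) (g t) u0
      rw [norm_sub_rev (chain (K t)) (g t)] at this
      linarith
    have h3 := hdistchain t ht
    have h4 : ‖f (chain (K t))‖ ≤ ‖f u0‖ + L' * ‖g t - u0‖ + (L' * δ) * ‖f (chain (K t))‖ := by
      nlinarith
    have h5 : (L' * δ) * ‖f (chain (K t))‖ ≤ (1/2) * ‖f (chain (K t))‖ := by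
      apply mul_le_mul_of_nonneg_right _ (norm_nonneg _)
      linarith [hδL]
    nlinarith [norm_nonneg (g t - u0), norm_nonneg (f (chain (K t)))]
  have hderiv : ∀ t ∈ Ico (0:ℝ) T, HasDerivWithinAt g (f (chain (K t))) (Ici t) t := by
    intro t ht
    have ht' : t ∈ Icc (0:ℝ) T := ⟨ht.1, ht.2.le⟩
    obtain ⟨h1, h2, _⟩ := hkey t ht'
    have haffd : HasDerivAt (fun s => chain (K t) + (s - S (K t)) • f (chain (K t)))
        (f (chain (K t))) t := by
      have : HasDerivAt (fun s : ℝ => s - S (K t)) 1 t := (hasDerivAt_id t).sub_const _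
      simpa using (this.smul_const (f (chain (K t)))).const_add (chain (K t))
    apply (haffd.hasDerivWithinAt (s := Ici t)).congr_of_eventuallyEq
    · have hmem : (Ici t ∩ Iio (S (K t + 1))) ∈ 𝓝[Ici t] t :=
        inter_mem_nhdsWithin _ (Iio_mem_nhds h2)
      filter_upwards [hmem] with s hs
      have hs1 : S (K t) ≤ s := le_trans h1 hs.1
      have hs0 : (0:ℝ) ≤ s := le_trans ht.1 hs.1
      rw [hge s hs0, haff (K t) s hs1 hs.2]
    · rw [hgt t ht']
  have hg0 : g 0 = u0 := by
    have h01 : (0:ℝ) < jumpTime H 1 ω := by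
      simpa [SE.jumpTime_zero H ω] using hSmono (Nat.lt_succ_self 0)
    have hgt0 := hgt 0 ⟨le_refl _, hT.le⟩
    have hk0 : K 0 = 0 :=
      SE.jumpCount_eq H ω hpos (le_of_eq (SE.jumpTime_zero H ω)) h01
    rw [hgt0, hk0]
    simp [hchain, eulerChain, hS, SE.jumpTime_zero H ω]
  set R : ℝ := gronwallBound 0 (2*L') (2*‖f u0‖) T with hR
  have h2L : (0:ℝ) < 2 * L' := by linarith
  have hfu0 : (0:ℝ) ≤ 2 * ‖f u0‖ := by positivity
  have hapriori : ∀ t ∈ Icc (0:ℝ) T, ‖g t - u0‖ ≤ R := by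
    intro t ht
    have := norm_le_gronwallBound_of_norm_deriv_right_le (f := fun s => g s - u0)
      (f' := fun s => f (chain (K s))) (δ := 0) (K := 2*L') (ε := 2*‖f u0‖) (a := 0) (b := T)
      ((hg.sub continuous_const).continuousOn)
      (fun s hs => ((hderiv s hs).sub_const _))
      (by simp [hg0])
      (fun s hs => by
        have := hfb s ⟨hs.1, hs.2.le⟩
        linarith)
      t ht
    calc ‖g t - u0‖ ≤ gronwallBound 0 (2*L') (2*‖f u0‖) (t - 0) := this
      _ ≤ R := by rw [sub_zero]; exact SE.gronwallBound_mono_x h2L hfu0 ht.2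
  have hRnn : 0 ≤ R := SE.gronwallBound_nonneg h2L hfu0 hT.le
  set B : ℝ := 2 * ‖f u0‖ + 2 * L' * R with hB
  have hBnn : 0 ≤ B := by positivity
  have hfB : ∀ t ∈ Icc (0:ℝ) T, ‖f (chain (K t))‖ ≤ B := by
    intro t ht
    have h1 := hfb t ht
    have h2 := hapriori t ht
    nlinarith
  intro t ht
  have main := dist_le_of_approx_trajectories_ODE (v := fun _ x => f x)
    (K := Real.toNNReal L') (f := g) (f' := fun s => f (chain (K s)))
    (g := u) (g' := fun s => f (u s)) (εf := L' * (δ * B)) (εg := 0) (δ := 0) (a := 0) (b := T)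
    (fun _ => hLip)
    hg.continuousOn
    hderiv
    (fun s hs => by
      have hs' : s ∈ Icc (0:ℝ) T := ⟨hs.1, hs.2.le⟩
      have h1 : dist (f (chain (K s))) (f (g s)) ≤ L' * ‖chain (K s) - g s‖ := by
        rw [dist_eq_norm]; exact hlip' _ _
      have h2 : ‖chain (K s) - g s‖ ≤ δ * ‖f (chain (K s))‖ := by
        rw [norm_sub_rev]; exact hdistchain s hs'
      have h3 := hfB s hs'
      calc dist (f (chain (K s))) (f (g s)) ≤ L' * (δ * ‖f (chain (K s))‖) := by nlinarith
        _ ≤ L' * (δ * B) := by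
            have := mul_le_mul_of_nonneg_left h3 hδ.le
            exact mul_le_mul_of_nonneg_left this hL0.le)
    (fun s hs => ((hu s hs.1).continuousWithinAt.mono (Icc_subset_Ici_self)))
    (fun s hs => (hu s hs.1).mono (Ici_subset_Ici.2 hs.1))
    (fun s hs => by simp)
    (by rw [hg0, hu0]; simp)
    t ht
  have hcoe : ((Real.toNNReal L' : ℝ≥0) : ℝ) = L' := Real.coe_toNNReal _ hL0.le
  rw [hcoe] at main
  calc dist (g t) (u t) ≤ gronwallBound 0 L' (L' * (δ * B) + 0) (t - 0) := main
    _ ≤ (L' * (δ * B)) * (T * exp (L' * T)) := by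
        rw [add_zero]
        exact SE.gronwallBound_le hL0 (by positivity) (by linarith [ht.2]) hT.le
    _ = δ * (L' * B * (T * exp (L' * T))) := by ring

end Det

section Prob
variable {Ω : Type*} [MeasurableSpace Ω] (P : Measure Ω) [IsProbabilityMeasure P]

lemma SE.expMeasure_eq (r : ℝ) : expMeasure r = volume.withDensity (exponentialPDF r) := rfl

lemma SE.exp_tail {r : ℝ} (hr : 0 < r) {δ : ℝ} (hδ : 0 ≤ δ) :
    expMeasure r (Ioi δ) = ENNReal.ofReal (exp (-(r * δ))) := by
  have hprob : IsProbabilityMeasure (expMeasure r) := isProbabilityMeasure_expMeasure hr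
  have hIic : expMeasure r (Iic δ) = ENNReal.ofReal (1 - exp (-(r * δ))) := by
    rw [SE.expMeasure_eq, withDensity_apply _ measurableSet_Iic,
      lintegral_exponentialPDF_eq_antiDeriv hr δ, if_pos hδ]
  have hcompl : Ioi δ = (Iic δ)ᶜ := (Set.compl_Iic).symm
  rw [hcompl, measure_compl measurableSet_Iic (measure_ne_top _ _), hIic,
    measure_univ]
  have h1 : exp (-(r * δ)) ≤ 1 := exp_le_one_iff.2 (neg_nonpos.2 (by positivity))
  rw [← ENNReal.ofReal_one, ← ENNReal.ofReal_sub _ (by linarith)]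
  norm_num

lemma SE.exp_nonpos {r : ℝ} (hr : 0 < r) : expMeasure r (Iic 0) = 0 := by
  rw [SE.expMeasure_eq, withDensity_apply _ measurableSet_Iic,
    lintegral_exponentialPDF_eq_antiDeriv hr 0, if_pos le_rfl]
  simp

lemma SE.exp_mgf_half {h : ℝ} (hh : 0 < h) :
    ∫⁻ x, ENNReal.ofReal (exp (-(h⁻¹ * x))) ∂(expMeasure h⁻¹) = ENNReal.ofReal 2⁻¹ := by
  have hr : (0:ℝ) < h⁻¹ := inv_pos.2 hh
  have hmeas : Measurable (fun x => ENNReal.ofReal (exp (-(h⁻¹ * x)))) :=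
    ENNReal.measurable_ofReal.comp (Real.measurable_exp.comp ((measurable_id.const_mul h⁻¹).neg))
  have hpdfmeas : Measurable (exponentialPDF h⁻¹) :=
    (measurable_exponentialPDFReal h⁻¹).ennreal_ofReal
  rw [SE.expMeasure_eq, lintegral_withDensity_eq_lintegral_mul _ hpdfmeas hmeas]
  have hpt : ∀ x : ℝ, (exponentialPDF h⁻¹ * fun x => ENNReal.ofReal (exp (-(h⁻¹ * x)))) x
      = ENNReal.ofReal 2⁻¹ * exponentialPDF (2 * h⁻¹) x := by
    intro x
    simp only [Pi.mul_apply]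
    rcases lt_or_ge x 0 with hx | hx
    · rw [exponentialPDF_of_neg hx, exponentialPDF_of_neg hx]
      simp
    · rw [exponentialPDF_of_nonneg hx, exponentialPDF_of_nonneg hx,
        ← ENNReal.ofReal_mul (by positivity), ← ENNReal.ofReal_mul (by norm_num)]
      congr 1
      rw [mul_assoc, ← Real.exp_add]
      ring_nf
  calc ∫⁻ x, (exponentialPDF h⁻¹ * fun x => ENNReal.ofReal (exp (-(h⁻¹ * x)))) x
      = ∫⁻ x, ENNReal.ofReal 2⁻¹ * exponentialPDF (2 * h⁻¹) x := by
        exact lintegral_congr hpt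
    _ = ENNReal.ofReal 2⁻¹ * ∫⁻ x, exponentialPDF (2 * h⁻¹) x := by
        have hm2 : Measurable (exponentialPDF (2 * h⁻¹)) :=
          (measurable_exponentialPDFReal _).ennreal_ofReal
        rw [lintegral_const_mul _ hm2]
    _ = ENNReal.ofReal 2⁻¹ := by
        rw [lintegral_exponentialPDF_eq_one (by positivity)]
        simp

lemma SE.exp_jumpTime_prod {h : ℝ} (hh : 0 < h) (H : ℕ → Ω → ℝ)
    (hmeas : ∀ k, Measurable (H k))
    (hindep : iIndepFun H P)
    (hdist : ∀ k, Measure.map (H k) P = expMeasure h⁻¹) (N : ℕ) :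
    ∫⁻ ω, ENNReal.ofReal (exp (-(h⁻¹ * jumpTime H N ω))) ∂P = (ENNReal.ofReal 2⁻¹) ^ N := by
  have hφ : Measurable (fun x : ℝ => ENNReal.ofReal (exp (-(h⁻¹ * x)))) :=
    ENNReal.measurable_ofReal.comp (Real.measurable_exp.comp ((measurable_id.const_mul h⁻¹).neg))
  induction N with
  | zero =>
    simp [jumpTime]
  | succ n ih =>
    have hTmeas : Measurable (fun ω => jumpTime H n ω) := by
      apply Finset.measurable_sum
      exact fun i _ => hmeas i
    have hsplit : ∀ ω, ENNReal.ofReal (exp (-(h⁻¹ * jumpTime H (n+1) ω)))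
        = ENNReal.ofReal (exp (-(h⁻¹ * jumpTime H n ω)))
          * ENNReal.ofReal (exp (-(h⁻¹ * H n ω))) := by
      intro ω
      rw [← ENNReal.ofReal_mul (by positivity), ← Real.exp_add]
      congr 2
      show -(h⁻¹ * jumpTime H (n+1) ω) = _
      rw [jumpTime, Finset.sum_range_succ]
      show -(h⁻¹ * (jumpTime H n ω + H n ω)) = _
      ring
    have hIndep : IndepFun (fun ω => jumpTime H n ω) (H n) P := by
      have h1 := hindep.indepFun_finsetSum_of_notMem hmeas
        (s := Finset.range n) (i := n) (by simp)
      have heq : (fun ω => jumpTime H n ω) = ∑ j ∈ Finset.range n, H j := by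
        funext ω
        rw [jumpTime]
        simp [Finset.sum_apply]
      rw [heq]
      exact h1
    have hIndep2 : IndepFun (fun ω => ENNReal.ofReal (exp (-(h⁻¹ * jumpTime H n ω))))
        (fun ω => ENNReal.ofReal (exp (-(h⁻¹ * H n ω)))) P :=
      hIndep.comp hφ hφ
    calc ∫⁻ ω, ENNReal.ofReal (exp (-(h⁻¹ * jumpTime H (n+1) ω))) ∂P
        = ∫⁻ ω, ((fun ω => ENNReal.ofReal (exp (-(h⁻¹ * jumpTime H n ω)))) *
            (fun ω => ENNReal.ofReal (exp (-(h⁻¹ * H n ω))))) ω ∂P := by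
          exact lintegral_congr fun ω => hsplit ω
      _ = (∫⁻ ω, ENNReal.ofReal (exp (-(h⁻¹ * jumpTime H n ω))) ∂P) *
            ∫⁻ ω, ENNReal.ofReal (exp (-(h⁻¹ * H n ω))) ∂P :=
          lintegral_mul_eq_lintegral_mul_lintegral_of_indepFun
            (hφ.comp hTmeas) (hφ.comp (hmeas n)) hIndep2
      _ = (ENNReal.ofReal 2⁻¹) ^ n * ENNReal.ofReal 2⁻¹ := by
          rw [ih]
          congr 1
          rw [← lintegral_map hφ (hmeas n), hdist n, SE.exp_mgf_half hh]
      _ = (ENNReal.ofReal 2⁻¹) ^ (n+1) := by ring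

lemma SE.jumpTime_markov {h : ℝ} (hh : 0 < h) (H : ℕ → Ω → ℝ)
    (hmeas : ∀ k, Measurable (H k))
    (hindep : iIndepFun H P)
    (hdist : ∀ k, Measure.map (H k) P = expMeasure h⁻¹) (N : ℕ) (T : ℝ) :
    P {ω | jumpTime H N ω ≤ T} ≤ ENNReal.ofReal (exp (h⁻¹ * T) * 2⁻¹ ^ N) := by
  have hφ : Measurable (fun x : ℝ => ENNReal.ofReal (exp (-(h⁻¹ * x)))) :=
    ENNReal.measurable_ofReal.comp (Real.measurable_exp.comp ((measurable_id.const_mul h⁻¹).neg))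
  have hTmeas : Measurable (fun ω => jumpTime H N ω) :=
    Finset.measurable_sum _ (fun i _ => hmeas i)
  set ε : ℝ≥0∞ := ENNReal.ofReal (exp (-(h⁻¹ * T))) with hε
  have hεpos : ε ≠ 0 := by
    simp [hε, ENNReal.ofReal_eq_zero, not_le, exp_pos]
  have hεtop : ε ≠ ⊤ := ENNReal.ofReal_ne_top
  have hsub : {ω | jumpTime H N ω ≤ T} ⊆
      {ω | ε ≤ ENNReal.ofReal (exp (-(h⁻¹ * jumpTime H N ω)))} := by
    intro ω hω
    simp only [mem_setOf_eq] at hω ⊢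
    apply ENNReal.ofReal_le_ofReal
    apply exp_le_exp.2
    have : h⁻¹ * jumpTime H N ω ≤ h⁻¹ * T :=
      mul_le_mul_of_nonneg_left hω (by positivity)
    linarith
  have hmarkov := mul_meas_ge_le_lintegral₀
    (μ := P) ((hφ.comp hTmeas).aemeasurable) ε
  simp only [Function.comp] at hmarkov
  rw [SE.exp_jumpTime_prod P hh H hmeas hindep hdist N] at hmarkov
  have h2 : P {ω | jumpTime H N ω ≤ T} ≤ (ENNReal.ofReal 2⁻¹) ^ N / ε := by
    rw [ENNReal.le_div_iff_mul_le (Or.inl hεpos) (Or.inl hεtop), mul_comm]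
    exact le_trans (mul_le_mul_right (measure_mono hsub) ε) hmarkov
  refine h2.trans ?_
  rw [ENNReal.div_eq_inv_mul, hε, ← ENNReal.ofReal_inv_of_pos (exp_pos _),
    ← Real.exp_neg, neg_neg, ← ENNReal.ofReal_pow (by norm_num),
    ← ENNReal.ofReal_mul (by positivity)]

end Prob

lemma SE.exp_neg_mul_tendsto {a : ℝ} (ha : 0 < a) :
    Tendsto (fun y : ℝ => exp (-(a * y))) atTop (𝓝 0) := by
  have h1 : Tendsto (fun y : ℝ => a * y) atTop atTop :=
    Tendsto.const_mul_atTop ha tendsto_id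
  exact Real.tendsto_exp_atBot.comp ((tendsto_neg_atTop_atBot).comp h1)

lemma SE.psi_tendsto (T δ : ℝ) (hT : 0 < T) (hδ : 0 < δ) :
    Tendsto (fun y : ℝ =>
      exp (-((3 * Real.log 2 - 1) * T) * y) + (3 * T * y + 1) * exp (-(δ * y)))
      atTop (𝓝 0) := by
  have hlog : (0:ℝ) < 3 * Real.log 2 - 1 := by
    have := Real.log_two_gt_d9
    linarith
  have h1 : Tendsto (fun y : ℝ => exp (-((3 * Real.log 2 - 1) * T) * y)) atTop (𝓝 0) := by
    have := SE.exp_neg_mul_tendsto (mul_pos hlog hT)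
    simpa [neg_mul] using this
  have hyd : Tendsto (fun y : ℝ => δ * y) atTop atTop :=
    Tendsto.const_mul_atTop hδ tendsto_id
  have h2 : Tendsto (fun y : ℝ => (δ * y) ^ (1:ℕ) * exp (-(δ * y))) atTop (𝓝 0) :=
    (Real.tendsto_pow_mul_exp_neg_atTop_nhds_zero 1).comp hyd
  have h3 : Tendsto (fun y : ℝ => (3 * T / δ) * ((δ * y) ^ (1:ℕ) * exp (-(δ * y))) +
      exp (-(δ * y))) atTop (𝓝 0) := by
    have := (h2.const_mul (3 * T / δ)).add (SE.exp_neg_mul_tendsto hδ)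
    simpa using this
  have heq : (fun y : ℝ => (3 * T * y + 1) * exp (-(δ * y))) =
      (fun y : ℝ => (3 * T / δ) * ((δ * y) ^ (1:ℕ) * exp (-(δ * y))) + exp (-(δ * y))) := by
    funext y
    field_simp
  rw [show (0:ℝ) = 0 + 0 by norm_num]
  refine Tendsto.congr (fun y => ?_) (h1.add h3)
  rw [congrFun heq y]

lemma SE.real_bound {T δ h : ℝ} (hT : 0 < T) (hδ : 0 < δ) (hh : 0 < h) :
    exp (h⁻¹ * T) * 2⁻¹ ^ (⌈3 * T / h⌉₊) + (⌈3 * T / h⌉₊ : ℝ) * exp (-(h⁻¹ * δ)) ≤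
      exp (-((3 * Real.log 2 - 1) * T) * h⁻¹) + (3 * T * h⁻¹ + 1) * exp (-(δ * h⁻¹)) := by
  set N := ⌈3 * T / h⌉₊ with hN
  have hb1 : exp (h⁻¹ * T) * 2⁻¹ ^ N ≤ exp (-((3 * Real.log 2 - 1) * T) * h⁻¹) := by
    have hhalf : (2⁻¹ : ℝ) = exp (-Real.log 2) := by
      rw [Real.exp_neg, Real.exp_log two_pos]
    rw [hhalf, ← Real.exp_nat_mul, ← Real.exp_add]
    apply exp_le_exp.2
    have hceil : 3 * T / h ≤ (N : ℝ) := Nat.le_ceil _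
    have hlog2 : (0:ℝ) < Real.log 2 := Real.log_pos one_lt_two
    have : (3 * T / h) * Real.log 2 ≤ (N : ℝ) * Real.log 2 :=
      mul_le_mul_of_nonneg_right hceil hlog2.le
    have hdiv : 3 * T / h = 3 * T * h⁻¹ := div_eq_mul_inv _ _
    rw [hdiv] at this
    nlinarith
  have hb2 : (N : ℝ) * exp (-(h⁻¹ * δ)) ≤ (3 * T * h⁻¹ + 1) * exp (-(δ * h⁻¹)) := by
    have hceil : (N : ℝ) < 3 * T / h + 1 := Nat.ceil_lt_add_one (by positivity)
    have hdiv : 3 * T / h = 3 * T * h⁻¹ := div_eq_mul_inv _ _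
    rw [hdiv] at hceil
    rw [mul_comm h⁻¹ δ]
    exact mul_le_mul_of_nonneg_right hceil.le (exp_pos _).le
  linarith

end Aux

/-- Weak convergence of the stochastic Euler dynamics to the ODE solution as `h ↓ 0`,
for Lipschitz `f`: for every bounded continuous functional `F` on
`C([0,∞); ℝ^d)` (compact-open topology), `𝔼[F(V_h)] → F(u)`. -/
theorem stmt8 (d : ℕ) {Ω : Type*} [MeasurableSpace Ω] (P : Measure Ω) [IsProbabilityMeasure P]
    [MeasurableSpace C(ℝ≥0, EuclideanSpace ℝ (Fin d))]
    [BorelSpace C(ℝ≥0, EuclideanSpace ℝ (Fin d))]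
    (f : EuclideanSpace ℝ (Fin d) → EuclideanSpace ℝ (Fin d))
    (L : ℝ≥0) (hLip : LipschitzWith L f)
    (u0 : EuclideanSpace ℝ (Fin d))
    -- the ODE solution `u' = f(u)`, `u(0) = u₀`, as a function and as a continuous path
    (u : ℝ → EuclideanSpace ℝ (Fin d)) (hu0 : u 0 = u0)
    (hu : ∀ t : ℝ, 0 ≤ t → HasDerivWithinAt u (f (u t)) (Set.Ici 0) t)
    (uC : C(ℝ≥0, EuclideanSpace ℝ (Fin d))) (huC : ∀ t : ℝ≥0, uC t = u t)
    -- for each `h > 0`, i.i.d. exponential timesteps with mean `h`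
    (H : ℝ → ℕ → Ω → ℝ)
    (hHmeas : ∀ h : ℝ, 0 < h → ∀ k, Measurable (H h k))
    (hHindep : ∀ h : ℝ, 0 < h → iIndepFun (H h) P)
    (hHdist : ∀ h : ℝ, 0 < h → ∀ k, Measure.map (H h k) P = expMeasure h⁻¹)
    -- the stochastic Euler dynamics, as a random continuous path
    (V : ℝ → Ω → C(ℝ≥0, EuclideanSpace ℝ (Fin d)))
    (hVmeas : ∀ h : ℝ, 0 < h → Measurable (V h))
    (hV : ∀ h : ℝ, 0 < h → ∀ ω, ∀ t : ℝ≥0, V h ω t = eulerPath f u0 (H h) (t : ℝ) ω) :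
    ∀ F : C(ℝ≥0, EuclideanSpace ℝ (Fin d)) → ℝ, Continuous F → (∃ M : ℝ, ∀ x, |F x| ≤ M) →
      Filter.Tendsto (fun h : ℝ => ∫ ω, F (V h ω) ∂P)
        (nhdsWithin 0 (Set.Ioi 0)) (nhds (F uC)) := by
  classical
  intro F hFc hFb
  obtain ⟨M, hM⟩ := hFb
  have hM0 : 0 ≤ M := le_trans (abs_nonneg _) (hM uC)
  rw [Metric.tendsto_nhds]
  intro η hη
  -- Use continuity of `F` at `uC` in the compact-open topology
  have hball : F ⁻¹' (Metric.ball (F uC) (η/2)) ∈ nhds uC :=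
    (hFc.tendsto uC) (Metric.ball_mem_nhds _ (by linarith))
  obtain ⟨⟨Kset, ε⟩, ⟨hKc, hε⟩, hsub⟩ :=
    (nhds_basis_uniformity'
      (Metric.uniformity_basis_dist.compactConvergenceUniformity)).mem_iff.1 hball
  obtain ⟨T', hT'⟩ := hKc.bddAbove
  set T : ℝ := max (T' : ℝ) 1 with hTdef
  have hT : 0 < T := lt_of_lt_of_le one_pos (le_max_right _ _)
  set L' : ℝ := (L : ℝ) + 1 with hL'def
  have hL1 : 1 ≤ L' := le_add_of_nonneg_left L.coe_nonneg
  have hL0 : 0 < L' := lt_of_lt_of_le one_pos hL1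
  have hLip' : LipschitzWith (Real.toNNReal L') f := by
    have h1 : LipschitzWith (L + 1) f := hLip.weaken le_self_add
    have h2 : Real.toNNReal L' = L + 1 := by
      apply NNReal.coe_injective
      rw [Real.coe_toNNReal _ (by positivity)]
      push_cast
      ring
    rw [h2]
    exact h1
  set R : ℝ := gronwallBound 0 (2*L') (2*‖f u0‖) T with hRdef
  have hR0 : 0 ≤ R := SE.gronwallBound_nonneg (by linarith) (by positivity) hT.le
  set Cfin : ℝ := L' * (2 * ‖f u0‖ + 2 * L' * R) * (T * Real.exp (L' * T)) with hCdef
  have hCfin : 0 ≤ Cfin := by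
    apply mul_nonneg (mul_nonneg hL0.le (by positivity))
    positivity
  set δ : ℝ := min ((ε/2)/(Cfin+1)) ((1/2)/L') with hδdef
  have hδ : 0 < δ := lt_min (by positivity) (by positivity)
  have hδL : δ * L' ≤ 1/2 := by
    have h1 : δ ≤ (1/2)/L' := min_le_right _ _
    calc δ * L' ≤ ((1/2)/L') * L' := mul_le_mul_of_nonneg_right h1 hL0.le
      _ = 1/2 := by field_simp
  have hδC : δ * Cfin ≤ ε/2 := by
    have h1 : δ ≤ (ε/2)/(Cfin+1) := min_le_left _ _
    have h2 : δ * (Cfin + 1) ≤ ε/2 := by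
      rw [← le_div_iff₀ (by positivity)]
      exact h1
    nlinarith
  set θ : ℝ := (η/2)/(2*M+1) with hθdef
  have hθ : 0 < θ := by positivity
  -- eventual smallness of the bad-event probability bound
  have hψc : Filter.Tendsto (fun h : ℝ =>
      Real.exp (-((3 * Real.log 2 - 1) * T) * h⁻¹) +
        (3 * T * h⁻¹ + 1) * Real.exp (-(δ * h⁻¹)))
      (nhdsWithin 0 (Set.Ioi 0)) (nhds 0) :=
    (SE.psi_tendsto T δ hT hδ).comp tendsto_inv_nhdsGT_zero
  have hev := hψc.eventually_lt_const hθ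
  filter_upwards [self_mem_nhdsWithin, hev] with h hhmem hψh
  have hh : 0 < h := hhmem
  set N : ℕ := ⌈3 * T / h⌉₊ with hNdef
  set Hh : ℕ → Ω → ℝ := H h with hHhdef
  have hHm : ∀ k, Measurable (Hh k) := hHmeas h hh
  -- the good event
  set Good : Set Ω := {ω | T < jumpTime Hh N ω} ∩
      ((⋂ k, ⋂ (_ : k < N), {ω | Hh k ω ≤ δ}) ∩ ⋂ k, {ω | 0 < Hh k ω}) with hGdef
  have hTNmeas : Measurable (fun ω => jumpTime Hh N ω) :=
    Finset.measurable_sum _ (fun i _ => hHm i)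
  have hGoodmeas : MeasurableSet Good := by
    apply MeasurableSet.inter
    · exact measurableSet_lt measurable_const hTNmeas
    apply MeasurableSet.inter
    · exact MeasurableSet.iInter fun k => MeasurableSet.iInter fun _ =>
        measurableSet_le (hHm k) measurable_const
    · exact MeasurableSet.iInter fun k => measurableSet_lt measurable_const (hHm k)
  -- bound the probability of the bad event
  have hsubBad : Goodᶜ ⊆ {ω | jumpTime Hh N ω ≤ T} ∪
      ((⋃ k ∈ Finset.range N, {ω | δ < Hh k ω}) ∪ ⋃ k, {ω | Hh k ω ≤ 0}) := by
    rw [← Set.compl_subset_compl]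
    intro ω hω
    simp only [Set.mem_compl_iff, Set.mem_union, Set.mem_iUnion, Set.mem_setOf_eq,
      Finset.mem_range, not_or, not_exists, not_le, not_lt] at hω
    obtain ⟨h1, h2, h3⟩ := hω
    simp only [hGdef, Set.mem_compl_iff, Set.mem_inter_iff, Set.mem_iInter,
      Set.mem_setOf_eq, not_and, not_forall, not_lt, not_le]
    push_neg
    exact ⟨h1, fun k hk => h2 k hk, fun k => h3 k⟩
  have hPA := SE.jumpTime_markov P hh Hh hHm (hHindep h hh) (hHdist h hh) N T
  have hPBk : ∀ k : ℕ, P {ω | δ < Hh k ω} = ENNReal.ofReal (Real.exp (-(h⁻¹ * δ))) := by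
    intro k
    have hpre : {ω | δ < Hh k ω} = Hh k ⁻¹' (Set.Ioi δ) := rfl
    rw [hpre, ← MeasureTheory.Measure.map_apply (hHm k) measurableSet_Ioi,
      hHdist h hh k, SE.exp_tail (inv_pos.2 hh) hδ.le]
  have hPC : P (⋃ k, {ω | Hh k ω ≤ 0}) = 0 := by
    apply measure_iUnion_null
    intro k
    have hpre : {ω | Hh k ω ≤ 0} = Hh k ⁻¹' (Set.Iic 0) := rfl
    rw [hpre, ← MeasureTheory.Measure.map_apply (hHm k) measurableSet_Iic,
      hHdist h hh k, SE.exp_nonpos (inv_pos.2 hh)]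
  have hPB : P (⋃ k ∈ Finset.range N, {ω | δ < Hh k ω}) ≤
      (N : ENNReal) * ENNReal.ofReal (Real.exp (-(h⁻¹ * δ))) := by
    refine (measure_biUnion_finset_le _ _).trans (le_of_eq ?_)
    rw [Finset.sum_congr rfl (fun k _ => hPBk k), Finset.sum_const, Finset.card_range,
      nsmul_eq_mul]
  have hPBad : P Goodᶜ ≤ ENNReal.ofReal (Real.exp (h⁻¹ * T) * 2⁻¹ ^ N +
      (N : ℝ) * Real.exp (-(h⁻¹ * δ))) := by
    calc P Goodᶜ ≤ P ({ω | jumpTime Hh N ω ≤ T}) +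
        P ((⋃ k ∈ Finset.range N, {ω | δ < Hh k ω}) ∪ ⋃ k, {ω | Hh k ω ≤ 0}) :=
          (measure_mono hsubBad).trans (measure_union_le _ _)
      _ ≤ P ({ω | jumpTime Hh N ω ≤ T}) +
          (P (⋃ k ∈ Finset.range N, {ω | δ < Hh k ω}) + P (⋃ k, {ω | Hh k ω ≤ 0})) :=
          add_le_add_right (measure_union_le _ _) _
      _ ≤ ENNReal.ofReal (Real.exp (h⁻¹ * T) * 2⁻¹ ^ N) +
          ((N : ENNReal) * ENNReal.ofReal (Real.exp (-(h⁻¹ * δ))) + 0) := by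
          exact add_le_add hPA (add_le_add hPB (le_of_eq hPC))
      _ = ENNReal.ofReal (Real.exp (h⁻¹ * T) * 2⁻¹ ^ N +
          (N : ℝ) * Real.exp (-(h⁻¹ * δ))) := by
          rw [add_zero, ← ENNReal.ofReal_natCast N,
            ← ENNReal.ofReal_mul (Nat.cast_nonneg N),
            ← ENNReal.ofReal_add (by positivity) (by positivity)]
  have hPreal : (P Goodᶜ).toReal < θ := by
    have h1 : (P Goodᶜ).toReal ≤ Real.exp (h⁻¹ * T) * 2⁻¹ ^ N +
        (N : ℝ) * Real.exp (-(h⁻¹ * δ)) :=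
      ENNReal.toReal_le_of_le_ofReal (by positivity) hPBad
    have h2 := SE.real_bound (δ := δ) (h := h) hT hδ hh
    calc (P Goodᶜ).toReal ≤ _ := h1
      _ ≤ _ := h2
      _ < θ := hψh
  -- on the good event, the path is uniformly close to `u` on `[0, T]`
  have hgood : ∀ ω ∈ Good, dist (F (V h ω)) (F uC) < η/2 := by
    intro ω hω
    simp only [hGdef, Set.mem_inter_iff, Set.mem_iInter, Set.mem_setOf_eq] at hω
    obtain ⟨hg1, hg2, hg3⟩ := hω
    set g : ℝ → EuclideanSpace ℝ (Fin d) := fun s => V h ω (Real.toNNReal s) with hgdef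
    have hgcont : Continuous g := (V h ω).continuous.comp continuous_real_toNNReal
    have hge : ∀ t : ℝ, 0 ≤ t → g t = eulerPath f u0 Hh t ω := by
      intro t ht
      rw [hgdef]
      simp only []
      rw [hV h hh ω (Real.toNNReal t), Real.coe_toNNReal t ht]
    have hdet := SE.euler_det f L' hL1 hLip' u0 u hu0 hu Hh ω g hgcont hge T δ hT hδ hδL N
      hg3 (fun k hk => hg2 k hk) hg1
    have hclose : ∀ x ∈ Kset, dist (uC x) (V h ω x) < ε := by
      intro x hx
      have hxT : (x : ℝ) ≤ T := by
        have h1 : x ≤ T' := hT' hx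
        have h2 : (x : ℝ) ≤ (T' : ℝ) := by exact_mod_cast h1
        exact h2.trans (le_max_left _ _)
      have hxmem : (x : ℝ) ∈ Set.Icc (0:ℝ) T := ⟨x.coe_nonneg, hxT⟩
      have hgx : g (x : ℝ) = V h ω x := by
        rw [hgdef]
        simp only []
        rw [Real.toNNReal_coe]
      have := hdet (x : ℝ) hxmem
      rw [hgx] at this
      have hd : dist (uC x) (V h ω x) ≤ δ * Cfin := by
        rw [huC x, dist_comm]
        exact this
      calc dist (uC x) (V h ω x) ≤ δ * Cfin := hd
        _ ≤ ε/2 := hδC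
        _ < ε := by linarith
    have hmem : V h ω ∈ F ⁻¹' (Metric.ball (F uC) (η/2)) := hsub (fun x hx => hclose x hx)
    simpa [Metric.mem_ball] using hmem
  -- integral estimate
  have hFmeas : Measurable (fun ω => F (V h ω)) := hFc.measurable.comp (hVmeas h hh)
  have hFint : MeasureTheory.Integrable (fun ω => F (V h ω)) P := by
    refine ⟨hFmeas.aestronglyMeasurable, ?_⟩
    apply MeasureTheory.HasFiniteIntegral.of_bounded (C := M)
    filter_upwards with ω
    simpa [Real.norm_eq_abs] using hM (V h ω)
  have hint1 : (∫ ω, F (V h ω) ∂P) - F uC = ∫ ω, (F (V h ω) - F uC) ∂P := by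
    rw [MeasureTheory.integral_sub hFint (MeasureTheory.integrable_const _),
      MeasureTheory.integral_const]
    simp
  have habs : |∫ ω, (F (V h ω) - F uC) ∂P| ≤ ∫ ω, |F (V h ω) - F uC| ∂P := by
    simpa [Real.norm_eq_abs] using
      MeasureTheory.norm_integral_le_integral_norm (μ := P) (fun ω => F (V h ω) - F uC)
  have hptwise : ∀ ω, |F (V h ω) - F uC| ≤
      η/2 + Set.indicator Goodᶜ (fun _ => 2*M) ω := by
    intro ω
    by_cases hωg : ω ∈ Good
    · have h1 := hgood ω hωg
      rw [Real.dist_eq] at h1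
      have h2 : Set.indicator Goodᶜ (fun _ => 2*M) ω = 0 := by
        apply Set.indicator_of_notMem
        simpa using hωg
      rw [h2, add_zero]
      linarith
    · have h2 : Set.indicator Goodᶜ (fun _ => 2*M) ω = 2*M := by
        apply Set.indicator_of_mem
        simpa using hωg
      rw [h2]
      have h3 : |F (V h ω) - F uC| ≤ |F (V h ω)| + |F uC| := abs_sub _ _
      have h4 := hM (V h ω)
      have h5 := hM uC
      linarith
  have hind_int : MeasureTheory.Integrable
      (fun ω => η/2 + Set.indicator Goodᶜ (fun _ => 2*M) ω) P := by
    apply MeasureTheory.Integrable.add (MeasureTheory.integrable_const _)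
    exact (MeasureTheory.integrable_const _).indicator hGoodmeas.compl
  have hint2 : ∫ ω, |F (V h ω) - F uC| ∂P ≤
      η/2 + (P Goodᶜ).toReal * (2*M) := by
    have hmono := MeasureTheory.integral_mono
      ((hFint.sub (MeasureTheory.integrable_const _)).abs) hind_int hptwise
    refine hmono.trans (le_of_eq ?_)
    rw [MeasureTheory.integral_add (MeasureTheory.integrable_const _)
      ((MeasureTheory.integrable_const _).indicator hGoodmeas.compl),
      MeasureTheory.integral_const, MeasureTheory.integral_indicator_const _ hGoodmeas.compl]
    simp [smul_eq_mul, measureReal_def]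
  have hPnn : 0 ≤ (P Goodᶜ).toReal := ENNReal.toReal_nonneg
  rw [Real.dist_eq]
  have hfinal : |(∫ ω, F (V h ω) ∂P) - F uC| ≤ η/2 + (P Goodᶜ).toReal * (2*M) := by
    rw [hint1]
    exact habs.trans hint2
  have hlast : (P Goodᶜ).toReal * (2*M) < η/2 := by
    have h1 : (P Goodᶜ).toReal * (2*M+1) < θ * (2*M+1) :=
      mul_lt_mul_of_pos_right hPreal (by positivity)
    have h2 : θ * (2*M+1) = η/2 := by
      rw [hθdef]
      field_simp
    nlinarith
  linarith [hfinal, hlast]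
end
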